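/- Let 0 < α ≤ 1/9 and θ ∈ (0, π) with cos θ ≠ 0. With Δ(θ) = 16α²cos⁴θ − 8α²cos²θ − 8αcos²θ + α² − 2α + 1 and ζ(θ) = (−4αcos²θ − α + 1 + √Δ(θ))/(4αcosθ), the quantity (2cosθ + ζ(θ))/ζ(θ) = (4αcos²θ − α + 1 + √Δ(θ))/(−4αcos²θ − α + 1 + √Δ(θ)) is strictly positive. -/
import Mathlib

theorem stmt6 (α : ℝ) (hα0 : 0 < α) (hα : α ≤ 1/9) (θ : ℝ)
    (hθ : θ ∈ Set.Ioo 0 Real.pi) (hc : Real.cos θ ≠ 0) :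
    (2*Real.cos θ +
        (-4*α*(Real.cos θ)^2 - α + 1 +
          Real.sqrt (16*α^2*(Real.cos θ)^4 - 8*α^2*(Real.cos θ)^2 - 8*α*(Real.cos θ)^2
            + α^2 - 2*α + 1)) / (4*α*(Real.cos θ))) /
      ((-4*α*(Real.cos θ)^2 - α + 1 +
          Real.sqrt (16*α^2*(Real.cos θ)^4 - 8*α^2*(Real.cos θ)^2 - 8*α*(Real.cos θ)^2
            + α^2 - 2*α + 1)) / (4*α*(Real.cos θ)))
    = (4*α*(Real.cos θ)^2 - α + 1 +
          Real.sqrt (16*α^2*(Real.cos θ)^4 - 8*α^2*(Real.cos θ)^2 - 8*α*(Real.cos θ)^2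
            + α^2 - 2*α + 1)) /
      (-4*α*(Real.cos θ)^2 - α + 1 +
          Real.sqrt (16*α^2*(Real.cos θ)^4 - 8*α^2*(Real.cos θ)^2 - 8*α*(Real.cos θ)^2
            + α^2 - 2*α + 1)) ∧
    0 < (4*α*(Real.cos θ)^2 - α + 1 +
          Real.sqrt (16*α^2*(Real.cos θ)^4 - 8*α^2*(Real.cos θ)^2 - 8*α*(Real.cos θ)^2
            + α^2 - 2*α + 1)) /
      (-4*α*(Real.cos θ)^2 - α + 1 +
          Real.sqrt (16*α^2*(Real.cos θ)^4 - 8*α^2*(Real.cos θ)^2 - 8*α*(Real.cos θ)^2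
            + α^2 - 2*α + 1)) := by
  set c := Real.cos θ with hcdef
  set s := Real.sqrt (16*α^2*c^4 - 8*α^2*c^2 - 8*α*c^2 + α^2 - 2*α + 1) with hs
  have hs0 : 0 ≤ s := Real.sqrt_nonneg _
  have hc2 : c^2 ≤ 1 := by
    have := Real.neg_one_le_cos θ
    have := Real.cos_le_one θ
    nlinarith
  have hD : 0 < -4*α*c^2 - α + 1 + s := by nlinarith
  have hN : 0 < 4*α*c^2 - α + 1 + s := by nlinarith
  have h4 : 4*α*c ≠ 0 := mul_ne_zero (by positivity) hc
  constructor
  · field_simp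
    ring
  · exact div_pos hN hD
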